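/- In seq-Phragmén, candidate loads are nondecreasing along the iterations: if s^(j) denotes the load of the candidate elected at iteration j, then s^(1) ≤ s^(2) ≤ ... ≤ s^(k), and consequently s_{c_j}^(j) ≥ x_r^(j−1) for every iteration j and voter r; in particular, if c_h is elected at iteration h then s_{c_h}^(h) ≥ (1 + x_i^(h−1) + Σ_{r : c_h ∈ A_r} x_r^(h−1)) / (1 + |{r : c_h ∈ A_r}|) for any voter i. -/

import Mathlib

open Finset

variable {C : Type*} [Fintype C] [DecidableEq C]

/-- The seq-Phragmén load that candidate `c` would get, given voter loads `x`. -/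
def phrCandLoad {V : Type*} [Fintype V] (A : V → Finset C) (x : V → ℚ) (c : C) : ℚ :=
  (1 + ∑ i ∈ univ.filter fun i => c ∈ A i, x i) /
    ((univ.filter fun i : V => c ∈ A i).card : ℚ)

/-- The voter loads after `j` iterations of seq-Phragmén, when `w t` is the
candidate elected at iteration `t+1` (0-indexed):  initially all loads are `0`,
and the approvers of the elected candidate get its candidate load. -/
def runLoad {V : Type*} [Fintype V] (A : V → Finset C) (w : ℕ → C) : ℕ → V → ℚ
  | 0 => fun _ => 0
  | j + 1 => fun i =>
      if w j ∈ A i then phrCandLoad A (runLoad A w j) (w j) else runLoad A w j i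

/-- `w` describes a valid run of seq-Phragmén for `k` iterations: at each
iteration the elected candidate is new, has at least one approver, and has
minimal candidate load among the non-elected candidates with an approver. -/
def isSeqPhragmenRun {V : Type*} [Fintype V] (A : V → Finset C) (w : ℕ → C)
    (k : ℕ) : Prop :=
  ∀ j < k, (∀ j' < j, w j' ≠ w j) ∧
    (univ.filter fun i : V => w j ∈ A i).Nonempty ∧
    ∀ c : C, (∀ j' < j, w j' ≠ c) → (univ.filter fun i : V => c ∈ A i).Nonempty →
      phrCandLoad A (runLoad A w j) (w j) ≤ phrCandLoad A (runLoad A w j) c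

lemma seqphragmen_voter_le {V : Type*} [Fintype V]
    (A : V → Finset C) (w : ℕ → C) (k : ℕ) (hrun : isSeqPhragmenRun A w k) :
    ∀ j < k, ∀ r : V, runLoad A w j r ≤ phrCandLoad A (runLoad A w j) (w j) := by
  intro j
  induction j with
  | zero =>
    intro _ r
    have hne := (hrun 0 (by omega)).2.1
    have hcard : (0:ℚ) < ((univ.filter fun i : V => w 0 ∈ A i).card : ℚ) := by
      exact_mod_cast card_pos.2 hne
    simp only [runLoad, phrCandLoad]
    positivity
  | succ j ih =>
    intro hk r
    have hj : j < k := by omega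
    have ihr := ih hj
    set x := runLoad A w j with hx
    set s := phrCandLoad A x (w j) with hs
    have hne : (univ.filter fun i : V => w (j+1) ∈ A i).Nonempty := (hrun (j+1) hk).2.1
    have hxle : (runLoad A w (j+1)) r ≤ s := by
      show (if w j ∈ A r then s else x r) ≤ s
      split
      · exact le_rfl
      · exact ihr r
    have h1 : s ≤ phrCandLoad A x (w (j+1)) :=
      (hrun j hj).2.2 (w (j+1))
        (fun j' hj' => (hrun (j+1) hk).1 j' (by omega)) hne
    have h2 : phrCandLoad A x (w (j+1)) ≤ phrCandLoad A (runLoad A w (j+1)) (w (j+1)) := by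
      unfold phrCandLoad
      have hcard : (0:ℚ) < ((univ.filter fun i : V => w (j+1) ∈ A i).card : ℚ) := by
        exact_mod_cast card_pos.2 hne
      apply div_le_div_of_nonneg_right ?_ hcard.le |>.trans_eq rfl
      apply add_le_add le_rfl
      apply Finset.sum_le_sum
      intro i _
      show x i ≤ (if w j ∈ A i then s else x i)
      split
      · exact ihr i
      · exact le_rfl
    exact hxle.trans (h1.trans h2)

lemma seqphragmen_mono_succ {V : Type*} [Fintype V]
    (A : V → Finset C) (w : ℕ → C) (k : ℕ) (hrun : isSeqPhragmenRun A w k) :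
    ∀ j, j + 1 < k →
      phrCandLoad A (runLoad A w j) (w j) ≤
        phrCandLoad A (runLoad A w (j+1)) (w (j+1)) := by
  intro j hk
  have hj : j < k := by omega
  have ihr := seqphragmen_voter_le A w k hrun j hj
  set x := runLoad A w j with hx
  set s := phrCandLoad A x (w j) with hs
  have hne : (univ.filter fun i : V => w (j+1) ∈ A i).Nonempty := (hrun (j+1) hk).2.1
  have h1 : s ≤ phrCandLoad A x (w (j+1)) :=
    (hrun j hj).2.2 (w (j+1))
      (fun j' hj' => (hrun (j+1) hk).1 j' (by omega)) hne
  have h2 : phrCandLoad A x (w (j+1)) ≤ phrCandLoad A (runLoad A w (j+1)) (w (j+1)) := by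
    unfold phrCandLoad
    have hcard : (0:ℚ) < ((univ.filter fun i : V => w (j+1) ∈ A i).card : ℚ) := by
      exact_mod_cast card_pos.2 hne
    apply div_le_div_of_nonneg_right ?_ hcard.le |>.trans_eq rfl
    apply add_le_add le_rfl
    apply Finset.sum_le_sum
    intro i _
    show x i ≤ (if w j ∈ A i then s else x i)
    split
    · exact ihr i
    · exact le_rfl
  exact h1.trans h2

/-- In seq-Phragmén the loads of the elected candidates are nondecreasing along
the iterations; consequently the load of the candidate elected at any iteration
is at least the current load of any voter, and at least the mediant
`(1 + x_i + Σ_{r : c_h ∈ A_r} x_r) / (1 + |{r : c_h ∈ A_r}|)` for any voter `i`. -/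
theorem seqphragmen_loads_monotone {V : Type*} [Fintype V]
    (A : V → Finset C) (w : ℕ → C) (k : ℕ) (hrun : isSeqPhragmenRun A w k) :
    (∀ j j', j ≤ j' → j' < k →
      phrCandLoad A (runLoad A w j) (w j) ≤ phrCandLoad A (runLoad A w j') (w j')) ∧
    (∀ j < k, ∀ r : V, runLoad A w j r ≤ phrCandLoad A (runLoad A w j) (w j)) ∧
    (∀ h < k, ∀ i : V,
      (1 + runLoad A w h i + ∑ r ∈ univ.filter fun r => w h ∈ A r, runLoad A w h r) /
          (1 + ((univ.filter fun r : V => w h ∈ A r).card : ℚ)) ≤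
        phrCandLoad A (runLoad A w h) (w h)) := by
  have hvle := seqphragmen_voter_le A w k hrun
  refine ⟨?_, hvle, ?_⟩
  · intro j j' hjj'
    induction j' with
    | zero =>
      intro _
      interval_cases j
      exact le_rfl
    | succ j' ih =>
      intro hk
      rcases Nat.lt_or_ge j (j'+1) with h | h
      · exact (ih (by omega) (by omega)).trans (seqphragmen_mono_succ A w k hrun j' hk)
      · have : j = j' + 1 := by omega
        subst this
        exact le_rfl
  · intro h hk i
    have hne := (hrun h hk).2.1
    set n : ℚ := ((univ.filter fun r : V => w h ∈ A r).card : ℚ) with hn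
    have hnpos : (0:ℚ) < n := by rw [hn]; exact_mod_cast card_pos.2 hne
    set S : ℚ := ∑ r ∈ univ.filter fun r => w h ∈ A r, runLoad A w h r with hS
    have hi : runLoad A w h i ≤ phrCandLoad A (runLoad A w h) (w h) := hvle h hk i
    have hsdef : phrCandLoad A (runLoad A w h) (w h) = (1 + S) / n := rfl
    set s := phrCandLoad A (runLoad A w h) (w h) with hsv
    have hsn : s * n = 1 + S := by
      rw [hsdef]
      field_simp
    rw [div_le_iff₀ (by linarith : (0:ℚ) < 1 + n)]
    have : s * (1 + n) = s + (1 + S) := by rw [mul_add, mul_one, hsn]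
    linarith
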